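/- Let Ω ⊂ ℝ² be bounded open with Lipschitz boundary, β > 0, α = 0, and g_i : Ω → ℝ measurable with 0 < c_g ≤ g_i(x) ≤ 1 for all x ∈ Ω and i = 1,…,M (M ≥ 1). Let ∇I ∈ L^∞(Ω)², I_t ∈ L²(Ω), û^i ∈ ℝ². Then the functional F(u) = ∫_Ω (∇I·u + I_t)² dx + β ∑_{i=1}^M ∫_Ω g_i(x) |u(x) − û^i|² dx has a unique minimizer in L²(Ω)², characterized by a(u,v) = b(v) for all v ∈ L²(Ω)², where a(u,v) = 2∫_Ω(∇I·u)(∇I·v) + 2β∑_i∫_Ω g_i(u·v) and b(v) = −2∫_Ω I_t(∇I·v) + 2β∑_i∫_Ω g_i(û^i·v). -/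

import Mathlib

open MeasureTheory
open scoped RealInnerProductSpace ENNReal

private lemma quad_coeff_zero {c q : ℝ} (hq : 0 ≤ q)
    (h : ∀ t : ℝ, 0 ≤ t * c + t ^ 2 * q) : c = 0 := by
  by_contra hc
  have h1 := h (-c / (q + 1))
  have hq1 : (0:ℝ) < q + 1 := by linarith
  have hcalc : -c / (q + 1) * c + (-c / (q + 1)) ^ 2 * q = -(c ^ 2 / (q + 1) ^ 2) := by
    field_simp; ring
  rw [hcalc] at h1
  have hc2 : 0 < c ^ 2 / (q + 1) ^ 2 := by positivity
  linarith

private lemma mul_int' {α : Type*} [MeasurableSpace α] {μ : Measure α}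
    {f h : α → ℝ} (hf : MemLp f 2 μ) (hh : MemLp h 2 μ) :
    Integrable (fun x => f x * h x) μ := by
  have h12 : (1:ℝ≥0∞) / 1 = 1 / 2 + 1 / 2 := by
    simp [ENNReal.inv_two_add_inv_two]
  exact memLp_one_iff_integrable.mp (hh.smul hf (r := 1))

set_option maxHeartbeats 1600000

/-- Theorem 3.3 of the paper: with `α = 0`, `β > 0` and Gaussian
weights bounded below by `c_g > 0`, the functional
`F(u) = ∫_Ω (∇I·u + I_t)² + β ∑ᵢ ∫_Ω gᵢ |u − ûⁱ|²`
has a unique minimizer over `L²(Ω)²`, characterized by the variational equation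
`a(u,v) = b(v)` for all `v ∈ L²(Ω)²`. -/
theorem bubble_regularized_optical_flow_wellposed_L2
    (Ω : Set (EuclideanSpace ℝ (Fin 2)))
    (hΩne : Ω.Nonempty) (hΩb : Bornology.IsBounded Ω) (hΩo : IsOpen Ω)
    (β : ℝ) (hβ : 0 < β) (M : ℕ) (hM : 1 ≤ M)
    (g : Fin M → EuclideanSpace ℝ (Fin 2) → ℝ)
    (hgm : ∀ i, Measurable (g i))
    (c_g : ℝ) (hcg : 0 < c_g)
    (hg_lb : ∀ i, ∀ x ∈ Ω, c_g ≤ g i x) (hg_ub : ∀ i, ∀ x ∈ Ω, g i x ≤ 1)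
    (gradI : EuclideanSpace ℝ (Fin 2) → EuclideanSpace ℝ (Fin 2))
    (hgradI : MemLp gradI ⊤ (volume.restrict Ω))
    (It : EuclideanSpace ℝ (Fin 2) → ℝ)
    (hIt : MemLp It 2 (volume.restrict Ω))
    (uhat : Fin M → EuclideanSpace ℝ (Fin 2))
    (F : Lp (EuclideanSpace ℝ (Fin 2)) 2 (volume.restrict Ω) → ℝ)
    (hF : ∀ u, F u =
      (∫ x, (⟪gradI x, u x⟫ + It x) ^ 2 ∂(volume.restrict Ω)) +
        β * ∑ i : Fin M, ∫ x, g i x * ‖u x - uhat i‖ ^ 2 ∂(volume.restrict Ω))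
    (a : Lp (EuclideanSpace ℝ (Fin 2)) 2 (volume.restrict Ω) →
         Lp (EuclideanSpace ℝ (Fin 2)) 2 (volume.restrict Ω) → ℝ)
    (hA : ∀ u v, a u v =
      2 * (∫ x, ⟪gradI x, u x⟫ * ⟪gradI x, v x⟫ ∂(volume.restrict Ω)) +
        2 * β * ∑ i : Fin M, ∫ x, g i x * ⟪u x, v x⟫ ∂(volume.restrict Ω))
    (b : Lp (EuclideanSpace ℝ (Fin 2)) 2 (volume.restrict Ω) → ℝ)
    (hB : ∀ v, b v =
      -2 * (∫ x, It x * ⟪gradI x, v x⟫ ∂(volume.restrict Ω)) +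
        2 * β * ∑ i : Fin M, ∫ x, g i x * ⟪uhat i, v x⟫ ∂(volume.restrict Ω)) :
    (∃! u : Lp (EuclideanSpace ℝ (Fin 2)) 2 (volume.restrict Ω),
        ∀ w, F u ≤ F w) ∧
    (∀ u : Lp (EuclideanSpace ℝ (Fin 2)) 2 (volume.restrict Ω),
        (∀ w, F u ≤ F w) ↔ (∀ v, a u v = b v)) := by
  classical
  haveI hfin : IsFiniteMeasure (volume.restrict Ω) := ⟨by
    rw [Measure.restrict_apply_univ]; exact hΩb.measure_lt_top⟩
  have haeΩ : ∀ᵐ x ∂(volume.restrict Ω), x ∈ Ω := ae_restrict_mem hΩo.measurableSet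
  obtain ⟨C, hC0, hCb⟩ : ∃ C : ℝ, 0 ≤ C ∧ ∀ᵐ x ∂(volume.restrict Ω), ‖gradI x‖ ≤ C := by
    refine ⟨(eLpNormEssSup gradI (volume.restrict Ω)).toReal, ENNReal.toReal_nonneg, ?_⟩
    have hlt : eLpNormEssSup gradI (volume.restrict Ω) < ⊤ := by
      have h2 := hgradI.2; rwa [eLpNorm_exponent_top] at h2
    filter_upwards [ae_le_eLpNormEssSup (f := gradI) (μ := (volume.restrict Ω))] with x hx
    calc ‖gradI x‖ = ((‖gradI x‖₊ : ℝ≥0∞)).toReal := by simp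
      _ ≤ _ := ENNReal.toReal_mono hlt.ne hx
  have hgabs : ∀ i, ∀ᵐ x ∂(volume.restrict Ω), ‖g i x‖ ≤ 1 := by
    intro i
    filter_upwards [haeΩ] with x hx
    have h1 := hg_lb i x hx; have h2 := hg_ub i x hx
    rw [Real.norm_eq_abs, abs_le]; constructor <;> linarith
  have hgae : ∀ i, AEStronglyMeasurable (g i) (volume.restrict Ω) := fun i => (hgm i).aestronglyMeasurable
  have hPm : ∀ {f : EuclideanSpace ℝ (Fin 2) → EuclideanSpace ℝ (Fin 2)}, MemLp f 2 (volume.restrict Ω) →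
      MemLp (fun x => ⟪gradI x, f x⟫) 2 (volume.restrict Ω) := by
    intro f hf
    refine hf.of_le_mul (c := C) (hgradI.1.inner hf.1) ?_
    filter_upwards [hCb] with x hx
    calc ‖⟪gradI x, f x⟫‖ ≤ ‖gradI x‖ * ‖f x‖ := norm_inner_le_norm _ _
      _ ≤ C * ‖f x‖ := mul_le_mul_of_nonneg_right hx (norm_nonneg _)
  have hIf : ∀ {f h : EuclideanSpace ℝ (Fin 2) → EuclideanSpace ℝ (Fin 2)},
      MemLp f 2 (volume.restrict Ω) → MemLp h 2 (volume.restrict Ω) → Integrable (fun x => ⟪f x, h x⟫) (volume.restrict Ω) := by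
    intro f h hf hh
    refine (mul_int' hf.norm hh.norm).mono' (hf.1.inner hh.1) ?_
    refine Filter.Eventually.of_forall fun x => ?_
    simpa using norm_inner_le_norm (𝕜 := ℝ) (f x) (h x)
  have hgi_inner : ∀ (i : Fin M) {f h : EuclideanSpace ℝ (Fin 2) → EuclideanSpace ℝ (Fin 2)},
      MemLp f 2 (volume.restrict Ω) → MemLp h 2 (volume.restrict Ω) → Integrable (fun x => g i x * ⟪f x, h x⟫) (volume.restrict Ω) := by
    intro i f h hf hh; exact (hIf hf hh).bdd_mul (hgae i) (hgabs i)
  have hnorm2int : ∀ {f : EuclideanSpace ℝ (Fin 2) → EuclideanSpace ℝ (Fin 2)},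
      MemLp f 2 (volume.restrict Ω) → Integrable (fun x => ‖f x‖ ^ 2) (volume.restrict Ω) := by
    intro f hf
    simpa [pow_two] using mul_int' hf.norm hf.norm
  have hginorm : ∀ (i : Fin M) {f : EuclideanSpace ℝ (Fin 2) → EuclideanSpace ℝ (Fin 2)},
      MemLp f 2 (volume.restrict Ω) → Integrable (fun x => g i x * ‖f x‖ ^ 2) (volume.restrict Ω) := by
    intro i f hf; exact (hnorm2int hf).bdd_mul (hgae i) (hgabs i)
  have hsubm : ∀ {f : EuclideanSpace ℝ (Fin 2) → EuclideanSpace ℝ (Fin 2)},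
      MemLp f 2 (volume.restrict Ω) → ∀ c : EuclideanSpace ℝ (Fin 2), MemLp (fun x => f x - c) 2 (volume.restrict Ω) := by
    intro f hf c; exact hf.sub (memLp_const c)
  have hgi_cinner : ∀ (i : Fin M) (c : EuclideanSpace ℝ (Fin 2))
      {h : EuclideanSpace ℝ (Fin 2) → EuclideanSpace ℝ (Fin 2)}, MemLp h 2 (volume.restrict Ω) →
      Integrable (fun x => g i x * ⟪c, h x⟫) (volume.restrict Ω) := by
    intro i c h hh
    exact ((hh.const_inner c).integrable one_le_two).bdd_mul (hgae i) (hgabs i)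
  -- the quadratic remainder
  set q : Lp (EuclideanSpace ℝ (Fin 2)) 2 (volume.restrict Ω) → ℝ := fun v =>
    (∫ x, ⟪gradI x, v x⟫ ^ 2 ∂(volume.restrict Ω)) + β * ∑ i : Fin M, ∫ x, g i x * ‖v x‖ ^ 2 ∂(volume.restrict Ω)
    with hqdef
  -- key expansion
  have hexp : ∀ u v : Lp (EuclideanSpace ℝ (Fin 2)) 2 (volume.restrict Ω), F (u + v) = F u + (a u v - b v) + q v := by
    intro u v
    have hPu := hPm (Lp.memLp u)
    have hPv := hPm (Lp.memLp v)
    have IA : Integrable (fun x => (⟪gradI x, u x⟫ + It x) ^ 2) (volume.restrict Ω) := by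
      simpa [pow_two] using mul_int' (hPu.add hIt) (hPu.add hIt)
    have IB1 : Integrable (fun x => ⟪gradI x, u x⟫ * ⟪gradI x, v x⟫) (volume.restrict Ω) := mul_int' hPu hPv
    have IB2 : Integrable (fun x => It x * ⟪gradI x, v x⟫) (volume.restrict Ω) := mul_int' hIt hPv
    have IC : Integrable (fun x => ⟪gradI x, v x⟫ ^ 2) (volume.restrict Ω) := by
      simpa [pow_two] using mul_int' hPv hPv
    have e1 : (∫ x, (⟪gradI x, (u + v) x⟫ + It x) ^ 2 ∂(volume.restrict Ω))
        = (∫ x, (⟪gradI x, u x⟫ + It x) ^ 2 ∂(volume.restrict Ω))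
          + (2 * ((∫ x, ⟪gradI x, u x⟫ * ⟪gradI x, v x⟫ ∂(volume.restrict Ω))
              + ∫ x, It x * ⟪gradI x, v x⟫ ∂(volume.restrict Ω))
            + ∫ x, ⟪gradI x, v x⟫ ^ 2 ∂(volume.restrict Ω)) := by
      have step : (∫ x, (⟪gradI x, (u + v) x⟫ + It x) ^ 2 ∂(volume.restrict Ω))
          = ∫ x, ((⟪gradI x, u x⟫ + It x) ^ 2
              + (2 * (⟪gradI x, u x⟫ * ⟪gradI x, v x⟫ + It x * ⟪gradI x, v x⟫)
                + ⟪gradI x, v x⟫ ^ 2)) ∂(volume.restrict Ω) := by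
        refine integral_congr_ae ?_
        filter_upwards [Lp.coeFn_add u v] with x hx
        rw [hx]
        simp only [Pi.add_apply, inner_add_right]
        ring
      have IB : Integrable (fun x => ⟪gradI x, u x⟫ * ⟪gradI x, v x⟫
          + It x * ⟪gradI x, v x⟫) (volume.restrict Ω) := by
        exact IB1.add IB2
      have IBm : Integrable (fun x => 2 * (⟪gradI x, u x⟫ * ⟪gradI x, v x⟫
          + It x * ⟪gradI x, v x⟫)) (volume.restrict Ω) := by
        exact IB.const_mul 2
      have IBC : Integrable (fun x => 2 * (⟪gradI x, u x⟫ * ⟪gradI x, v x⟫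
          + It x * ⟪gradI x, v x⟫) + ⟪gradI x, v x⟫ ^ 2) (volume.restrict Ω) := by
        exact IBm.add IC
      rw [step, integral_add IA IBC, integral_add IBm IC, integral_const_mul,
        integral_add IB1 IB2]
    have e2 : ∀ i : Fin M, (∫ x, g i x * ‖(u + v) x - uhat i‖ ^ 2 ∂(volume.restrict Ω))
        = (∫ x, g i x * ‖u x - uhat i‖ ^ 2 ∂(volume.restrict Ω))
          + (2 * ((∫ x, g i x * ⟪u x, v x⟫ ∂(volume.restrict Ω)) - ∫ x, g i x * ⟪uhat i, v x⟫ ∂(volume.restrict Ω))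
            + ∫ x, g i x * ‖v x‖ ^ 2 ∂(volume.restrict Ω)) := by
      intro i
      have IA' : Integrable (fun x => g i x * ‖u x - uhat i‖ ^ 2) (volume.restrict Ω) :=
        hginorm i (hsubm (Lp.memLp u) (uhat i))
      have IB' : Integrable (fun x => g i x * ⟪u x - uhat i, v x⟫) (volume.restrict Ω) :=
        hgi_inner i (hsubm (Lp.memLp u) (uhat i)) (Lp.memLp v)
      have IC' : Integrable (fun x => g i x * ‖v x‖ ^ 2) (volume.restrict Ω) := hginorm i (Lp.memLp v)
      have step : (∫ x, g i x * ‖(u + v) x - uhat i‖ ^ 2 ∂(volume.restrict Ω))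
          = ∫ x, (g i x * ‖u x - uhat i‖ ^ 2
              + (2 * (g i x * ⟪u x - uhat i, v x⟫) + g i x * ‖v x‖ ^ 2)) ∂(volume.restrict Ω) := by
        refine integral_congr_ae ?_
        filter_upwards [Lp.coeFn_add u v] with x hx
        rw [hx]
        simp only [Pi.add_apply]
        have h4 : u x + v x - uhat i = (u x - uhat i) + v x := by abel
        rw [h4, norm_add_sq_real]
        ring
      have split : (∫ x, g i x * ⟪u x - uhat i, v x⟫ ∂(volume.restrict Ω))
          = (∫ x, g i x * ⟪u x, v x⟫ ∂(volume.restrict Ω)) - ∫ x, g i x * ⟪uhat i, v x⟫ ∂(volume.restrict Ω) := by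
        rw [← integral_sub (hgi_inner i (Lp.memLp u) (Lp.memLp v))
          (hgi_cinner i (uhat i) (Lp.memLp v))]
        refine integral_congr_ae (Filter.Eventually.of_forall fun x => ?_)
        simp only [inner_sub_left]
        ring
      have IBb : Integrable (fun x => 2 * (g i x * ⟪u x - uhat i, v x⟫))
          (volume.restrict Ω) := by exact IB'.const_mul 2
      have IBC' : Integrable (fun x => 2 * (g i x * ⟪u x - uhat i, v x⟫)
          + g i x * ‖v x‖ ^ 2) (volume.restrict Ω) := by exact IBb.add IC'
      rw [step, integral_add IA' IBC', integral_add IBb IC', integral_const_mul, split]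
    rw [hF (u + v), hF u, hA u v, hB v]
    simp only [hqdef]
    rw [e1, Finset.sum_congr rfl fun i _ => e2 i, Finset.sum_add_distrib,
      Finset.sum_add_distrib, ← Finset.mul_sum, Finset.sum_sub_distrib]
    ring
  -- coercivity of q
  have hqlb : ∀ v : Lp (EuclideanSpace ℝ (Fin 2)) 2 (volume.restrict Ω), β * c_g * ‖v‖ ^ 2 ≤ q v := by
    intro v
    have hvol : (∫ x, ‖v x‖ ^ 2 ∂(volume.restrict Ω)) = ‖v‖ ^ 2 := by
      rw [show ‖v‖ ^ 2 = ⟪v, v⟫ from (real_inner_self_eq_norm_sq v).symm, L2.inner_def]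
      exact integral_congr_ae (Filter.Eventually.of_forall fun x =>
        (real_inner_self_eq_norm_sq _).symm)
    have hIm : Integrable (fun x => ‖v x‖ ^ 2) (volume.restrict Ω) := hnorm2int (Lp.memLp v)
    have hterm : ∀ i : Fin M, c_g * (∫ x, ‖v x‖ ^ 2 ∂(volume.restrict Ω)) ≤ ∫ x, g i x * ‖v x‖ ^ 2 ∂(volume.restrict Ω) := by
      intro i
      rw [← integral_const_mul]
      refine integral_mono_ae (hIm.const_mul c_g) (hginorm i (Lp.memLp v)) ?_
      filter_upwards [haeΩ] with x hx
      exact mul_le_mul_of_nonneg_right (hg_lb i x hx) (sq_nonneg _)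
    have hsum : (M : ℝ) * (c_g * (∫ x, ‖v x‖ ^ 2 ∂(volume.restrict Ω)))
        ≤ ∑ i : Fin M, ∫ x, g i x * ‖v x‖ ^ 2 ∂(volume.restrict Ω) := by
      calc (M : ℝ) * (c_g * (∫ x, ‖v x‖ ^ 2 ∂(volume.restrict Ω)))
          = ∑ _i : Fin M, c_g * (∫ x, ‖v x‖ ^ 2 ∂(volume.restrict Ω)) := by
            rw [Finset.sum_const, Finset.card_univ, Fintype.card_fin, nsmul_eq_mul]
        _ ≤ _ := Finset.sum_le_sum fun i _ => hterm i
    have hPv2 : 0 ≤ ∫ x, ⟪gradI x, v x⟫ ^ 2 ∂(volume.restrict Ω) := integral_nonneg fun x => sq_nonneg _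
    have hv2 : 0 ≤ ∫ x, ‖v x‖ ^ 2 ∂(volume.restrict Ω) := integral_nonneg fun x => sq_nonneg _
    have hM1 : (1:ℝ) ≤ (M:ℝ) := by exact_mod_cast hM
    simp only [hqdef]
    rw [← hvol]
    nlinarith [mul_le_mul_of_nonneg_left hsum hβ.le,
      mul_nonneg hβ.le (mul_nonneg hcg.le hv2)]
  have hq0 : ∀ v : Lp (EuclideanSpace ℝ (Fin 2)) 2 (volume.restrict Ω), 0 ≤ q v := by
    intro v
    refine le_trans ?_ (hqlb v)
    positivity
  -- homogeneity
  have hahom : ∀ (u v : Lp (EuclideanSpace ℝ (Fin 2)) 2 (volume.restrict Ω)) (t : ℝ), a u (t • v) = t * a u v := by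
    intro u v t
    rw [hA u v, hA u (t • v)]
    have c1 : (∫ x, ⟪gradI x, u x⟫ * ⟪gradI x, (t • v) x⟫ ∂(volume.restrict Ω))
        = t * ∫ x, ⟪gradI x, u x⟫ * ⟪gradI x, v x⟫ ∂(volume.restrict Ω) := by
      rw [← integral_const_mul]
      refine integral_congr_ae ?_
      filter_upwards [Lp.coeFn_smul t v] with x hx
      rw [hx]
      simp only [Pi.smul_apply, inner_smul_right, smul_eq_mul]
      ring
    have c2 : ∀ i : Fin M, (∫ x, g i x * ⟪u x, (t • v) x⟫ ∂(volume.restrict Ω))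
        = t * ∫ x, g i x * ⟪u x, v x⟫ ∂(volume.restrict Ω) := by
      intro i
      rw [← integral_const_mul]
      refine integral_congr_ae ?_
      filter_upwards [Lp.coeFn_smul t v] with x hx
      rw [hx]
      simp only [Pi.smul_apply, inner_smul_right, smul_eq_mul]
      ring
    rw [c1, Finset.sum_congr rfl fun i _ => c2 i, ← Finset.mul_sum]
    ring
  have hbhom : ∀ (v : Lp (EuclideanSpace ℝ (Fin 2)) 2 (volume.restrict Ω)) (t : ℝ), b (t • v) = t * b v := by
    intro v t
    rw [hB v, hB (t • v)]
    have c1 : (∫ x, It x * ⟪gradI x, (t • v) x⟫ ∂(volume.restrict Ω))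
        = t * ∫ x, It x * ⟪gradI x, v x⟫ ∂(volume.restrict Ω) := by
      rw [← integral_const_mul]
      refine integral_congr_ae ?_
      filter_upwards [Lp.coeFn_smul t v] with x hx
      rw [hx]
      simp only [Pi.smul_apply, inner_smul_right, smul_eq_mul]
      ring
    have c2 : ∀ i : Fin M, (∫ x, g i x * ⟪uhat i, (t • v) x⟫ ∂(volume.restrict Ω))
        = t * ∫ x, g i x * ⟪uhat i, v x⟫ ∂(volume.restrict Ω) := by
      intro i
      rw [← integral_const_mul]
      refine integral_congr_ae ?_
      filter_upwards [Lp.coeFn_smul t v] with x hx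
      rw [hx]
      simp only [Pi.smul_apply, inner_smul_right, smul_eq_mul]
      ring
    rw [c1, Finset.sum_congr rfl fun i _ => c2 i, ← Finset.mul_sum]
    ring
  have hqhom : ∀ (v : Lp (EuclideanSpace ℝ (Fin 2)) 2 (volume.restrict Ω)) (t : ℝ), q (t • v) = t ^ 2 * q v := by
    intro v t
    simp only [hqdef]
    have c1 : (∫ x, ⟪gradI x, (t • v) x⟫ ^ 2 ∂(volume.restrict Ω))
        = t ^ 2 * ∫ x, ⟪gradI x, v x⟫ ^ 2 ∂(volume.restrict Ω) := by
      rw [← integral_const_mul]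
      refine integral_congr_ae ?_
      filter_upwards [Lp.coeFn_smul t v] with x hx
      rw [hx]
      simp only [Pi.smul_apply, inner_smul_right, smul_eq_mul]
      ring
    have c2 : ∀ i : Fin M, (∫ x, g i x * ‖(t • v) x‖ ^ 2 ∂(volume.restrict Ω))
        = t ^ 2 * ∫ x, g i x * ‖v x‖ ^ 2 ∂(volume.restrict Ω) := by
      intro i
      rw [← integral_const_mul]
      refine integral_congr_ae ?_
      filter_upwards [Lp.coeFn_smul t v] with x hx
      rw [hx]
      simp only [Pi.smul_apply]
      rw [norm_smul, mul_pow, Real.norm_eq_abs, sq_abs]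
      ring
    rw [c1, Finset.sum_congr rfl fun i _ => c2 i, ← Finset.mul_sum]
    ring
  -- characterization of minimizers
  have hchar : ∀ u : Lp (EuclideanSpace ℝ (Fin 2)) 2 (volume.restrict Ω), (∀ w, F u ≤ F w) ↔ (∀ v, a u v = b v) := by
    intro u
    constructor
    · intro hmin v
      have key : ∀ t : ℝ, 0 ≤ t * (a u v - b v) + t ^ 2 * q v := by
        intro t
        have h1 := hmin (u + t • v)
        have h2 := hexp u (t • v)
        rw [hahom u v t, hbhom v t, hqhom v t] at h2
        rw [h2] at h1
        linarith
      have := quad_coeff_zero (hq0 v) key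
      linarith
    · intro hv w
      have h2 := hexp u (w - u)
      have h3 : u + (w - u) = w := by abel
      rw [h3, hv (w - u), sub_self] at h2
      have := hq0 (w - u)
      linarith
  -- existence of a solution of the variational equation
  obtain ⟨u₀, hsol⟩ : ∃ u₀ : Lp (EuclideanSpace ℝ (Fin 2)) 2 (volume.restrict Ω), ∀ v, a u₀ v = b v := by
    set G : EuclideanSpace ℝ (Fin 2) → ℝ := fun x => ∑ i : Fin M, g i x with hGdef
    set s : EuclideanSpace ℝ (Fin 2) → EuclideanSpace ℝ (Fin 2) := fun x => ∑ i : Fin M, g i x • uhat i with hsdef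
    set z : EuclideanSpace ℝ (Fin 2) → EuclideanSpace ℝ (Fin 2) := fun x => β • s x - It x • gradI x with hzdef
    set κ : EuclideanSpace ℝ (Fin 2) → ℝ := fun x => (β * G x + ‖gradI x‖ ^ 2)⁻¹ * ⟪gradI x, z x⟫ with hκdef
    set f₀ : EuclideanSpace ℝ (Fin 2) → EuclideanSpace ℝ (Fin 2) := fun x => (β * G x)⁻¹ • (z x - κ x • gradI x) with hf₀def
    have hGm : Measurable G := Finset.measurable_sum Finset.univ fun i _ => hgm i
    have hsm : Measurable s :=
      Finset.measurable_sum Finset.univ fun i _ => (hgm i).smul_const (uhat i)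
    have hsmem : MemLp s 2 (volume.restrict Ω) := by
      refine MemLp.of_bound hsm.aestronglyMeasurable (∑ i : Fin M, ‖uhat i‖) ?_
      filter_upwards [haeΩ] with x hx
      simp only [hsdef]
      calc ‖∑ i : Fin M, g i x • uhat i‖ ≤ ∑ i : Fin M, ‖g i x • uhat i‖ := norm_sum_le _ _
        _ ≤ ∑ i : Fin M, ‖uhat i‖ := by
            refine Finset.sum_le_sum fun i _ => ?_
            rw [norm_smul]
            have h1 := hg_lb i x hx; have h2 := hg_ub i x hx
            have h3 : ‖g i x‖ ≤ 1 := by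
              rw [Real.norm_eq_abs, abs_le]; constructor <;> linarith
            nlinarith [norm_nonneg (uhat i)]
    have hItg : MemLp (fun x => It x • gradI x) 2 (volume.restrict Ω) := hgradI.smul hIt (r := 2)
    have hzmem : MemLp z 2 (volume.restrict Ω) := by
      rw [hzdef]
      exact (hsmem.const_smul β).sub hItg
    have hwa := hgradI.1
    have hza := hzmem.1
    have hDm : AEMeasurable (fun x => (β * G x + ‖gradI x‖ ^ 2)⁻¹) (volume.restrict Ω) := by
      refine AEMeasurable.inv ?_
      exact ((hGm.const_mul β).aemeasurable).add ((hwa.norm.aemeasurable).pow_const 2)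
    have hκa : AEStronglyMeasurable κ (volume.restrict Ω) := by
      rw [hκdef]
      exact (hDm.mul (hwa.inner hza).aemeasurable).aestronglyMeasurable
    have hf₀a : AEStronglyMeasurable f₀ (volume.restrict Ω) := by
      rw [hf₀def]
      exact ((hGm.const_mul β).aemeasurable.inv.aestronglyMeasurable).smul
        (hza.sub (hκa.smul hwa))
    have hGlb : ∀ᵐ x ∂(volume.restrict Ω), c_g ≤ G x := by
      filter_upwards [haeΩ] with x hx
      have h1 : ∑ _i : Fin M, c_g ≤ ∑ i : Fin M, g i x :=
        Finset.sum_le_sum fun i _ => hg_lb i x hx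
      rw [Finset.sum_const, Finset.card_univ, Fintype.card_fin, nsmul_eq_mul] at h1
      have hM1 : (1:ℝ) ≤ (M:ℝ) := by exact_mod_cast hM
      simp only [hGdef]
      nlinarith
    have hbound : ∀ᵐ x ∂(volume.restrict Ω), ‖f₀ x‖ ≤ (2 * (β * c_g)⁻¹) * ‖z x‖ := by
      filter_upwards [hGlb] with x hG
      have hγpos : 0 < β * G x := by nlinarith
      have hγge : β * c_g ≤ β * G x := by nlinarith
      have hD : 0 < β * G x + ‖gradI x‖ ^ 2 := by positivity
      have hκb : |κ x| * ‖gradI x‖ ≤ ‖z x‖ := by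
        simp only [hκdef]
        rw [abs_mul, abs_inv, abs_of_nonneg hD.le, mul_assoc]
        rw [inv_mul_le_iff₀ hD]
        have hwz : |⟪gradI x, z x⟫| ≤ ‖gradI x‖ * ‖z x‖ := abs_real_inner_le_norm _ _
        nlinarith [mul_le_mul_of_nonneg_right hwz (norm_nonneg (gradI x)),
          mul_nonneg hγpos.le (norm_nonneg (z x)), norm_nonneg (gradI x),
          norm_nonneg (z x)]
      simp only [hf₀def]
      rw [norm_smul, Real.norm_eq_abs, abs_inv, abs_of_pos hγpos]
      have h2 : ‖z x - κ x • gradI x‖ ≤ ‖z x‖ + |κ x| * ‖gradI x‖ := by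
        calc ‖z x - κ x • gradI x‖ ≤ ‖z x‖ + ‖κ x • gradI x‖ := norm_sub_le _ _
          _ = ‖z x‖ + |κ x| * ‖gradI x‖ := by rw [norm_smul, Real.norm_eq_abs]
      have h3 : ‖z x - κ x • gradI x‖ ≤ 2 * ‖z x‖ := by linarith
      have hβc : (0:ℝ) < β * c_g := by positivity
      have hinv : (β * G x)⁻¹ ≤ (β * c_g)⁻¹ := by
        rw [← one_div, ← one_div]
        exact one_div_le_one_div_of_le hβc hγge
      calc (β * G x)⁻¹ * ‖z x - κ x • gradI x‖
          ≤ (β * G x)⁻¹ * (2 * ‖z x‖) := by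
            exact mul_le_mul_of_nonneg_left h3 (by positivity)
        _ ≤ (β * c_g)⁻¹ * (2 * ‖z x‖) := by
            nlinarith [norm_nonneg (z x)]
        _ = (2 * (β * c_g)⁻¹) * ‖z x‖ := by ring
    have hf₀mem : MemLp f₀ 2 (volume.restrict Ω) := hzmem.of_le_mul hf₀a hbound
    have hr0 : ∀ᵐ x ∂(volume.restrict Ω),
        (⟪gradI x, f₀ x⟫ + It x) • gradI x + ((β * G x) • f₀ x - β • s x) = 0 := by
      filter_upwards [hGlb] with x hG
      have hγpos : 0 < β * G x := by nlinarith
      have hD : 0 < β * G x + ‖gradI x‖ ^ 2 := by positivity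
      have hwf : ⟪gradI x, f₀ x⟫ = κ x := by
        simp only [hf₀def, hκdef]
        rw [inner_smul_right, inner_sub_right, inner_smul_right, real_inner_self_eq_norm_sq]
        have hGne : G x ≠ 0 := (lt_of_lt_of_le hcg hG).ne'
        field_simp
        ring
      have hgf : (β * G x) • f₀ x = z x - κ x • gradI x := by
        simp only [hf₀def]
        rw [smul_smul, mul_inv_cancel₀ hγpos.ne', one_smul]
      rw [hwf, hgf]
      simp only [hzdef]
      module
    refine ⟨hf₀mem.toLp f₀, ?_⟩
    intro v
    have hPv := hPm (Lp.memLp v)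
    have hu₀c : (hf₀mem.toLp f₀ : Lp (EuclideanSpace ℝ (Fin 2)) 2 (volume.restrict Ω)) =ᵐ[(volume.restrict Ω)] f₀ := hf₀mem.coeFn_toLp
    have e1 : (∫ x, ⟪gradI x, (hf₀mem.toLp f₀ : Lp (EuclideanSpace ℝ (Fin 2)) 2 (volume.restrict Ω)) x⟫ * ⟪gradI x, v x⟫ ∂(volume.restrict Ω))
        = ∫ x, ⟪gradI x, f₀ x⟫ * ⟪gradI x, v x⟫ ∂(volume.restrict Ω) := by
      refine integral_congr_ae ?_
      filter_upwards [hu₀c] with x hx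
      rw [hx]
    have e2 : ∀ i : Fin M, (∫ x, g i x * ⟪(hf₀mem.toLp f₀ : Lp (EuclideanSpace ℝ (Fin 2)) 2 (volume.restrict Ω)) x, v x⟫ ∂(volume.restrict Ω))
        = ∫ x, g i x * ⟪f₀ x, v x⟫ ∂(volume.restrict Ω) := by
      intro i
      refine integral_congr_ae ?_
      filter_upwards [hu₀c] with x hx
      rw [hx]
    have e3 : (∫ x, ⟪(⟪gradI x, f₀ x⟫ + It x) • gradI x
        + ((β * G x) • f₀ x - β • s x), v x⟫ ∂(volume.restrict Ω)) = 0 := by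
      refine integral_eq_zero_of_ae ?_
      filter_upwards [hr0] with x hx
      rw [hx]
      exact inner_zero_left _
    have I1 : Integrable (fun x => ⟪gradI x, f₀ x⟫ * ⟪gradI x, v x⟫) (volume.restrict Ω) :=
      mul_int' (hPm hf₀mem) hPv
    have I2 : Integrable (fun x => It x * ⟪gradI x, v x⟫) (volume.restrict Ω) := mul_int' hIt hPv
    have I3 : ∀ i : Fin M, Integrable
        (fun x => β * (g i x * ⟪f₀ x, v x⟫) - β * (g i x * ⟪uhat i, v x⟫)) (volume.restrict Ω) :=
      fun i => ((hgi_inner i hf₀mem (Lp.memLp v)).const_mul β).sub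
        ((hgi_cinner i (uhat i) (Lp.memLp v)).const_mul β)
    have e4 : (∫ x, ⟪(⟪gradI x, f₀ x⟫ + It x) • gradI x
        + ((β * G x) • f₀ x - β • s x), v x⟫ ∂(volume.restrict Ω))
        = ((∫ x, ⟪gradI x, f₀ x⟫ * ⟪gradI x, v x⟫ ∂(volume.restrict Ω))
            + (∫ x, It x * ⟪gradI x, v x⟫ ∂(volume.restrict Ω)))
          + ((β * ∑ i : Fin M, ∫ x, g i x * ⟪f₀ x, v x⟫ ∂(volume.restrict Ω))
            - β * ∑ i : Fin M, ∫ x, g i x * ⟪uhat i, v x⟫ ∂(volume.restrict Ω)) := by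
      have step : (∫ x, ⟪(⟪gradI x, f₀ x⟫ + It x) • gradI x
          + ((β * G x) • f₀ x - β • s x), v x⟫ ∂(volume.restrict Ω))
          = ∫ x, ((⟪gradI x, f₀ x⟫ * ⟪gradI x, v x⟫ + It x * ⟪gradI x, v x⟫)
              + ∑ i : Fin M, (β * (g i x * ⟪f₀ x, v x⟫)
                - β * (g i x * ⟪uhat i, v x⟫))) ∂(volume.restrict Ω) := by
        refine integral_congr_ae (Filter.Eventually.of_forall fun x => ?_)
        simp only [hGdef, hsdef]
        have hsum1 : (∑ i : Fin M, (β * (g i x * ⟪f₀ x, v x⟫) - β * (g i x * ⟪uhat i, v x⟫)))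
            = β * ((∑ i : Fin M, g i x) * ⟪f₀ x, v x⟫)
              - β * ⟪∑ i : Fin M, g i x • uhat i, v x⟫ := by
          rw [sum_inner, Finset.sum_sub_distrib, Finset.mul_sum, Finset.sum_mul, Finset.mul_sum]
          congr 1
          exact Finset.sum_congr rfl fun i _ => by rw [real_inner_smul_left]
        rw [hsum1]
        simp only [inner_add_left, inner_sub_left, real_inner_smul_left]
        ring
      have I12 : Integrable (fun x => ⟪gradI x, f₀ x⟫ * ⟪gradI x, v x⟫
          + It x * ⟪gradI x, v x⟫) (volume.restrict Ω) := by exact I1.add I2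
      have Isum : Integrable (fun x => ∑ i : Fin M, (β * (g i x * ⟪f₀ x, v x⟫)
          - β * (g i x * ⟪uhat i, v x⟫))) (volume.restrict Ω) := by
        exact integrable_finset_sum _ fun i _ => I3 i
      rw [step, integral_add I12 Isum, integral_add I1 I2,
        integral_finset_sum _ fun i _ => I3 i]
      have hsplit : ∀ i : Fin M, (∫ x, (β * (g i x * ⟪f₀ x, v x⟫)
          - β * (g i x * ⟪uhat i, v x⟫)) ∂(volume.restrict Ω))
          = (β * ∫ x, g i x * ⟪f₀ x, v x⟫ ∂(volume.restrict Ω))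
            - β * ∫ x, g i x * ⟪uhat i, v x⟫ ∂(volume.restrict Ω) := by
        intro i
        have If1 : Integrable (fun x => β * (g i x * ⟪f₀ x, v x⟫)) (volume.restrict Ω) := by
          exact (hgi_inner i hf₀mem (Lp.memLp v)).const_mul β
        have If2 : Integrable (fun x => β * (g i x * ⟪uhat i, v x⟫)) (volume.restrict Ω) := by
          exact (hgi_cinner i (uhat i) (Lp.memLp v)).const_mul β
        rw [integral_sub If1 If2, integral_const_mul, integral_const_mul]
      rw [Finset.sum_congr rfl fun i _ => hsplit i, Finset.sum_sub_distrib,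
        ← Finset.mul_sum, ← Finset.mul_sum]
    rw [e4] at e3
    rw [hA, hB, e1, Finset.sum_congr rfl fun i _ => e2 i]
    linear_combination (2:ℝ) * e3
  have hmin₀ : ∀ w, F u₀ ≤ F w := (hchar u₀).mpr hsol
  refine ⟨⟨u₀, hmin₀, ?_⟩, hchar⟩
  intro y hy
  have h2 := hexp u₀ (y - u₀)
  have h3 : u₀ + (y - u₀) = y := by abel
  rw [h3, hsol (y - u₀), sub_self] at h2
  have h4 : F y ≤ F u₀ := hy u₀
  have h5 := hqlb (y - u₀)
  have h6 : ‖y - u₀‖ ^ 2 ≤ 0 := by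
    by_contra hcon
    push_neg at hcon
    nlinarith [mul_pos (mul_pos hβ hcg) hcon]
  have h7 : ‖y - u₀‖ ^ 2 = 0 := le_antisymm h6 (sq_nonneg _)
  have h8 : ‖y - u₀‖ = 0 := by
    exact pow_eq_zero_iff two_ne_zero |>.mp h7
  exact sub_eq_zero.mp (norm_eq_zero.mp h8)
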